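/- The coefficients $c_g$ of $\prod_{n \ge 1}(1-q^n)^{-24}$ satisfy $c_g \equiv 0 \pmod 9$ for all $g \equiv 2 \pmod 3$. -/

import Mathlib

open PowerSeries Finset

/-- Integer power of a power series over `ℚ`, using the power-series inverse
for negative exponents. -/
noncomputable def zp (f : PowerSeries ℚ) (n : ℤ) : PowerSeries ℚ :=
  if 0 ≤ n then f ^ n.toNat else f⁻¹ ^ (-n).toNat

/-- The coefficient `w_g` of `∏_{r ≥ 1} (1+q^r)^{-e} · ∏_{s ≥ 1} (1-q^{2s})^{-(24-e)/2}`.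
Since each factor with index `> g` is `1 + O(q^{g+1})`, the coefficient of `q^g`
equals that of the product truncated at index `g`. -/
noncomputable def W (e : ℤ) (g : ℕ) : ℚ :=
  PowerSeries.coeff g
    ((∏ r ∈ Icc 1 g, zp (1 + PowerSeries.X ^ r) (-e)) *
     (∏ s ∈ Icc 1 g, zp (1 - PowerSeries.X ^ (2 * s)) (-((24 - e) / 2))))

/-- The coefficient `c_g` of the Yau–Zaslow series `∏_{s ≥ 1} (1-q^s)^{-24}`. -/
noncomputable def C (g : ℕ) : ℚ :=
  PowerSeries.coeff g (∏ s ∈ Icc 1 g, ((1 - PowerSeries.X ^ s)⁻¹) ^ 24)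

noncomputable def geom (R : Type*) [CommRing R] (s : ℕ) : PowerSeries R :=
  PowerSeries.mk fun n => if s ∣ n then 1 else 0

variable {R S : Type*} [CommRing R] [CommRing S]

lemma coeff_geom (s n : ℕ) : coeff n (geom R s) = if s ∣ n then 1 else 0 :=
  coeff_mk _ _

lemma one_sub_X_pow_mul_geom (s : ℕ) (hs : s ≠ 0) :
    (1 - X ^ s : PowerSeries R) * geom R s = 1 := by
  ext n
  rw [sub_mul, one_mul, map_sub, coeff_geom, coeff_X_pow_mul', coeff_one]
  rcases eq_or_ne n 0 with rfl | hn
  · rw [if_pos (dvd_zero s), if_neg (by omega), if_pos rfl]; ring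
  · rw [if_neg hn]
    by_cases h1 : s ∣ n
    · have hsn : s ≤ n := Nat.le_of_dvd (Nat.pos_of_ne_zero hn) h1
      rw [if_pos h1, if_pos hsn, coeff_geom, if_pos (Nat.dvd_sub h1 dvd_rfl)]; ring
    · rw [if_neg h1]
      by_cases hsn : s ≤ n
      · rw [if_pos hsn, coeff_geom, if_neg, sub_zero]
        intro hd
        exact h1 (by have := Nat.sub_add_cancel hsn; exact this ▸ Nat.dvd_add hd dvd_rfl)
      · rw [if_neg hsn, sub_zero]

lemma map_geom (f : R →+* S) (s : ℕ) : PowerSeries.map f (geom R s) = geom S s := by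
  ext n
  rw [coeff_map, coeff_geom, coeff_geom, apply_ite f, map_one, map_zero]

abbrev P9 := PowerSeries (ZMod 9)

lemma nine_zero : (9 : P9) = 0 := by
  have h := map_natCast (PowerSeries.C (R := ZMod 9)) 9
  have h0 : ((9 : ℕ) : ZMod 9) = 0 := by decide
  rw [h0, map_zero] at h
  exact_mod_cast h.symm

lemma pow9 (a : P9) : (1 - a) ^ 9 = (1 - a ^ 3) ^ 3 := by
  linear_combination (-a + 4*a^2 - 9*a^3 + 14*a^4 - 14*a^5 + 9*a^6 - 4*a^7 + a^8) * nine_zero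

lemma C_neg3 : PowerSeries.C (R := ZMod 9) (-3) = -3 := by
  have h := map_natCast (PowerSeries.C (R := ZMod 9)) 3
  rw [show ((-3:ZMod 9)) = -((3:ℕ):ZMod 9) by decide, map_neg, h]
  norm_cast

lemma geom_pow27 (s : ℕ) (hs : s ≠ 0) :
    geom (ZMod 9) s ^ 27 = geom (ZMod 9) (3 * s) ^ 9 := by
  have h1 := one_sub_X_pow_mul_geom (R := ZMod 9) s hs
  have h2 := one_sub_X_pow_mul_geom (R := ZMod 9) (3 * s) (by omega)
  have hD : (1 - X ^ s : P9) ^ 9 = (1 - X ^ (3 * s)) ^ 3 := by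
    have h := pow9 (X ^ s : P9)
    rwa [← pow_mul, mul_comm s 3] at h
  have key : ((1 - X ^ s : P9) * geom (ZMod 9) s) ^ 27 * geom (ZMod 9) (3*s) ^ 9
      = ((1 - X ^ (3*s) : P9) * geom (ZMod 9) (3*s)) ^ 9 * geom (ZMod 9) s ^ 27 := by
    linear_combination (geom (ZMod 9) s ^ 27 * geom (ZMod 9) (3*s) ^ 9 *
      ((1 - X ^ s : P9) ^ 18 + (1 - X ^ s : P9) ^ 9 * (1 - X ^ (3*s)) ^ 3
        + (1 - X ^ (3*s) : P9) ^ 6)) * hD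
  rw [h1, h2, one_pow, one_pow, one_mul, one_mul] at key
  exact key.symm

/-- supported on multiples of 3 -/
def Supp3 (f : P9) : Prop := ∀ n : ℕ, n % 3 ≠ 0 → coeff n f = 0

lemma supp3_one : Supp3 1 := by
  intro n hn
  rw [coeff_one, if_neg (by omega)]

lemma supp3_mul {f g : P9} (hf : Supp3 f) (hg : Supp3 g) : Supp3 (f * g) := by
  intro n hn
  rw [coeff_mul]
  apply Finset.sum_eq_zero
  rintro ⟨i, j⟩ hij
  rw [Finset.HasAntidiagonal.mem_antidiagonal] at hij
  by_cases hi : i % 3 = 0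
  · rw [hg j (by omega), mul_zero]
  · rw [hf i hi, zero_mul]

lemma supp3_pow {f : P9} (hf : Supp3 f) (k : ℕ) : Supp3 (f ^ k) := by
  induction k with
  | zero => simpa using supp3_one
  | succ k ih => rw [pow_succ]; exact supp3_mul ih hf

lemma supp3_prod {ι : Type*} (t : Finset ι) (f : ι → P9) (h : ∀ i ∈ t, Supp3 (f i)) :
    Supp3 (∏ i ∈ t, f i) :=
  Finset.prod_induction f Supp3 (fun _ _ => supp3_mul) supp3_one h

lemma supp3_geom (s : ℕ) : Supp3 (geom (ZMod 9) (3 * s)) := by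
  intro n hn
  rw [coeff_geom, if_neg]
  intro h
  obtain ⟨c, hc⟩ := h
  rw [mul_assoc] at hc
  omega

lemma supp3_one_sub (s : ℕ) : Supp3 (1 - X ^ (3 * s)) := by
  intro n hn
  rw [map_sub, coeff_one, coeff_X_pow, if_neg (by omega), if_neg, sub_zero]
  omega

lemma count_eq (g v : ℕ) (hv : v % 3 = 2) (hvg : v ≤ g) :
    ((Finset.Icc 1 g).filter fun m => m ≤ v ∧ 3*m ∣ v - m).card
      = ((Finset.Icc 1 g).filter fun m => 2*m ≤ v ∧ 3*m ∣ v - 2*m).card := by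
  apply Finset.card_nbij' (i := fun m => v / m) (j := fun m => v / m)
  · intro m hm
    simp only [Finset.mem_coe, Finset.mem_filter, Finset.mem_Icc] at hm ⊢
    obtain ⟨⟨hm1, hmg⟩, hmv, c, hc⟩ := hm
    rw [mul_assoc] at hc
    have hm2 : m % 3 = 2 := by omega
    have hvm : v = m * (3*c+1) := by
      have h' : m * (3*c+1) = 3*(m*c) + m := by ring
      omega
    have hdiv : v / m = 3*c+1 := by
      rw [hvm]; exact Nat.mul_div_cancel_left _ (by omega)
    rw [hdiv]
    obtain ⟨t, hmt⟩ : ∃ t, m = 3*t + 2 := ⟨m/3, by omega⟩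
    have hv2 : v = (3*t+2) * (3*c+1) := by rw [hvm, hmt]
    have h2 : (3*t+2) * (3*c+1) = 3*((3*c+1)*t) + 2*(3*c+1) := by ring
    refine ⟨⟨by omega, ?_⟩, by omega, ⟨t, ?_⟩⟩
    · omega
    · have h3 : 3*(3*c+1)*t = 3*((3*c+1)*t) := by ring
      omega
  · intro m hm
    simp only [Finset.mem_coe, Finset.mem_filter, Finset.mem_Icc] at hm ⊢
    obtain ⟨⟨hm1, hmg⟩, hmv, c, hc⟩ := hm
    rw [mul_assoc] at hc
    have hm2 : m % 3 = 1 := by omega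
    have hvm : v = m * (3*c+2) := by
      have h' : m * (3*c+2) = 3*(m*c) + 2*m := by ring
      omega
    have hdiv : v / m = 3*c+2 := by
      rw [hvm]; exact Nat.mul_div_cancel_left _ (by omega)
    rw [hdiv]
    obtain ⟨t, hmt⟩ : ∃ t, m = 3*t + 1 := ⟨m/3, by omega⟩
    have hv2 : v = (3*t+1) * (3*c+2) := by rw [hvm, hmt]
    have h2 : (3*t+1) * (3*c+2) = 3*((3*c+2)*t) + (3*c+2) := by ring
    refine ⟨⟨by omega, ?_⟩, by omega, ⟨t, ?_⟩⟩
    · omega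
    · have h3 : 3*(3*c+2)*t = 3*((3*c+2)*t) := by ring
      omega
  · intro m hm
    simp only [Finset.mem_coe, Finset.mem_filter, Finset.mem_Icc] at hm
    obtain ⟨⟨hm1, hmg⟩, hmv, c, hc⟩ := hm
    rw [mul_assoc] at hc
    have hmdvd : m ∣ v := by
      have hvm : v = m * (3*c+1) := by
        have h' : m * (3*c+1) = 3*(m*c) + m := by ring
        omega
      exact ⟨_, hvm⟩
    exact Nat.div_div_self hmdvd (by omega)
  · intro m hm
    simp only [Finset.mem_coe, Finset.mem_filter, Finset.mem_Icc] at hm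
    obtain ⟨⟨hm1, hmg⟩, hmv, c, hc⟩ := hm
    rw [mul_assoc] at hc
    have hmdvd : m ∣ v := by
      have hvm : v = m * (3*c+2) := by
        have h' : m * (3*c+2) = 3*(m*c) + 2*m := by ring
        omega
      exact ⟨_, hvm⟩
    exact Nat.div_div_self hmdvd (by omega)

lemma coeff_Wser (g v : ℕ) (hv : v % 3 = 2) (hvg : v ≤ g) :
    coeff v
      (∑ m ∈ Finset.Icc 1 g, (X ^ m - X ^ (2*m)) * geom (ZMod 9) (3*m)) = 0 := by
  rw [map_sum]
  have hterm : ∀ m ∈ Finset.Icc 1 g,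
      coeff v ((X ^ m - X ^ (2*m)) * geom (ZMod 9) (3*m))
      = (if m ≤ v ∧ 3*m ∣ v - m then (1:ZMod 9) else 0)
        - (if 2*m ≤ v ∧ 3*m ∣ v - 2*m then (1:ZMod 9) else 0) := by
    intro m _
    rw [sub_mul, map_sub, coeff_X_pow_mul', coeff_X_pow_mul']
    congr 1
    · by_cases h1 : m ≤ v
      · rw [if_pos h1, coeff_geom]
        by_cases h2 : 3*m ∣ v - m
        · rw [if_pos h2, if_pos ⟨h1, h2⟩]
        · rw [if_neg h2, if_neg (by tauto)]
      · rw [if_neg h1, if_neg (by tauto)]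
    · by_cases h1 : 2*m ≤ v
      · rw [if_pos h1, coeff_geom]
        by_cases h2 : 3*m ∣ v - 2*m
        · rw [if_pos h2, if_pos ⟨h1, h2⟩]
        · rw [if_neg h2, if_neg (by tauto)]
      · rw [if_neg h1, if_neg (by tauto)]
  rw [Finset.sum_congr rfl hterm, Finset.sum_sub_distrib, Finset.sum_boole,
    Finset.sum_boole, count_eq g v hv hvg, sub_self]

lemma coeff_E3_mul_Wser (g j : ℕ) (hj : j % 3 = 2) (hjg : j ≤ g) :
    coeff j ((∏ s ∈ Finset.Icc 1 g, (1 - X ^ (3*s) : P9)) *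
      (∑ m ∈ Finset.Icc 1 g, (X ^ m - X ^ (2*m)) * geom (ZMod 9) (3*m))) = 0 := by
  rw [coeff_mul]
  apply Finset.sum_eq_zero
  rintro ⟨u, v⟩ huv
  rw [Finset.HasAntidiagonal.mem_antidiagonal] at huv
  by_cases hu : u % 3 = 0
  · rw [coeff_Wser g v (by omega) (by omega), mul_zero]
  · rw [supp3_prod _ _ (fun s _ => supp3_one_sub s) u hu, zero_mul]

lemma coeffB (g j : ℕ) (hj : j % 3 = 2) (hjg : j ≤ g) :
    coeff j (∏ s ∈ Finset.Icc 1 g, (1 - X ^ s : P9) ^ 3) = 0 := by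
  classical
  set A := Finset.Icc 1 g with hA
  have hfac : ∀ s ∈ A, (1 - X ^ s : P9) ^ 3
      = (PowerSeries.C (R := ZMod 9) (-3)) * (X ^ s * (1 - X ^ s)) + (1 - X ^ (3*s)) := by
    intro s _
    rw [C_neg3, show (X ^ (3*s) : P9) = (X ^ s) ^ 3 by rw [← pow_mul, mul_comm]]
    ring
  rw [Finset.prod_congr rfl hfac, Finset.prod_add, map_sum]
  -- all terms with t.card ≠ 1 vanish
  have hzero : ∀ t ∈ A.powerset, t ∉ A.powerset.filter (fun t => t.card = 1) →
      coeff j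
        ((∏ s ∈ t, (PowerSeries.C (R := ZMod 9) (-3)) * (X ^ s * (1 - X ^ s))) *
          ∏ s ∈ A \ t, (1 - X ^ (3*s) : P9)) = 0 := by
    intro t ht hnt
    have hcard : t.card ≠ 1 := by
      intro h; exact hnt (Finset.mem_filter.2 ⟨ht, h⟩)
    rcases Nat.eq_zero_or_pos t.card with h0 | hpos
    · have : t = ∅ := Finset.card_eq_zero.1 h0
      subst this
      rw [Finset.prod_empty, one_mul, Finset.sdiff_empty]
      exact supp3_prod A _ (fun s _ => supp3_one_sub s) j (by omega)
    · have h2 : 2 ≤ t.card := by omega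
      have hprod : (∏ s ∈ t, (PowerSeries.C (R := ZMod 9) (-3)) * (X ^ s * (1 - X ^ s))) = 0 := by
        rw [Finset.prod_mul_distrib, Finset.prod_const, ← map_pow]
        have : (-3 : ZMod 9) ^ t.card = 0 := by
          have h9 : (-3 : ZMod 9) ^ 2 = 0 := by decide
          calc (-3 : ZMod 9) ^ t.card = (-3)^2 * (-3)^(t.card - 2) := by
                rw [← pow_add]; congr 1; omega
            _ = 0 := by rw [h9, zero_mul]
        rw [this, map_zero, zero_mul]
      rw [hprod, zero_mul, map_zero]
  rw [← Finset.sum_subset (Finset.filter_subset _ _) hzero]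
  have himg : A.powerset.filter (fun t => t.card = 1) = A.image (fun m => {m}) := by
    ext t
    simp only [Finset.mem_filter, Finset.mem_powerset, Finset.card_eq_one, Finset.mem_image]
    constructor
    · rintro ⟨hsub, a, rfl⟩
      exact ⟨a, hsub (Finset.mem_singleton_self a), rfl⟩
    · rintro ⟨a, ha, rfl⟩
      exact ⟨Finset.singleton_subset_iff.2 ha, a, rfl⟩
  rw [himg, Finset.sum_image (fun m _ n _ h => Finset.singleton_injective h)]
  have hterm : ∀ m ∈ A,
      coeff j
        ((∏ s ∈ ({m} : Finset ℕ), (PowerSeries.C (R := ZMod 9) (-3)) * (X ^ s * (1 - X ^ s))) *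
          ∏ s ∈ A \ {m}, (1 - X ^ (3*s) : P9))
      = coeff j (PowerSeries.C (R := ZMod 9) (-3) *
          ((∏ s ∈ A, (1 - X ^ (3*s) : P9)) * ((X ^ m - X ^ (2*m)) * geom (ZMod 9) (3*m)))) := by
    intro m hm
    have hsd : ∏ s ∈ A \ {m}, (1 - X ^ (3*s) : P9)
        = (∏ s ∈ A, (1 - X ^ (3*s) : P9)) * geom (ZMod 9) (3*m) := by
      rw [Finset.prod_eq_prod_diff_singleton_mul hm (fun s => (1 - X ^ (3*s) : P9)),
        mul_assoc, one_sub_X_pow_mul_geom (3*m) (by simp [hA, Finset.mem_Icc] at hm; omega),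
        mul_one]
    rw [Finset.prod_singleton, hsd]
    congr 1
    rw [show (X ^ (2*m) : P9) = X ^ m * X ^ m by rw [two_mul, pow_add]]
    ring
  rw [Finset.sum_congr rfl hterm, ← map_sum, ← Finset.mul_sum, ← Finset.mul_sum,
    coeff_C_mul, coeff_E3_mul_Wser g j hj hjg, mul_zero]

lemma main9 (g : ℕ) (hg : g % 3 = 2) :
    coeff g (∏ s ∈ Finset.Icc 1 g, geom (ZMod 9) s ^ 24) = 0 := by
  have hfac : ∀ s ∈ Finset.Icc 1 g, geom (ZMod 9) s ^ 24
      = geom (ZMod 9) (3*s) ^ 9 * (1 - X ^ s) ^ 3 := by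
    intro s hs
    have hs0 : s ≠ 0 := by simp only [Finset.mem_Icc] at hs; omega
    have h1 := one_sub_X_pow_mul_geom (R := ZMod 9) s hs0
    calc geom (ZMod 9) s ^ 24
        = geom (ZMod 9) s ^ 24 * ((1 - X ^ s) * geom (ZMod 9) s) ^ 3 := by
          rw [h1, one_pow, mul_one]
      _ = geom (ZMod 9) s ^ 27 * (1 - X ^ s) ^ 3 := by ring
      _ = geom (ZMod 9) (3*s) ^ 9 * (1 - X ^ s) ^ 3 := by rw [geom_pow27 s hs0]
  rw [Finset.prod_congr rfl hfac, Finset.prod_mul_distrib, coeff_mul]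
  apply Finset.sum_eq_zero
  rintro ⟨u, v⟩ huv
  rw [Finset.HasAntidiagonal.mem_antidiagonal] at huv
  by_cases hu : u % 3 = 0
  · rw [coeffB g v (by omega) (by omega), mul_zero]
  · rw [supp3_prod _ _ (fun s _ => supp3_pow (supp3_geom s) 9) u hu, zero_mul]

theorem stmt16 (g : ℕ) (hg : g % 3 = 2) : ∃ k : ℤ, _root_.C g = 9 * k := by
  have hinv : ∀ s ∈ Finset.Icc 1 g, ((1 - X ^ s : PowerSeries ℚ)⁻¹) = geom ℚ s := by
    intro s hs
    have hs0 : s ≠ 0 := by simp only [Finset.mem_Icc] at hs; omega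
    rw [PowerSeries.inv_eq_iff_mul_eq_one]
    · rw [mul_comm]; exact one_sub_X_pow_mul_geom s hs0
    · simp [zero_pow hs0]
  have hC : _root_.C g = coeff g (∏ s ∈ Finset.Icc 1 g, geom ℚ s ^ 24) := by
    unfold _root_.C
    exact congrArg (coeff (R := ℚ) g) (Finset.prod_congr rfl fun s hs => by rw [hinv s hs])
  set N : ℤ := coeff g (∏ s ∈ Finset.Icc 1 g, geom ℤ s ^ 24) with hN
  have hmapQ : (PowerSeries.map (Int.castRingHom ℚ)) (∏ s ∈ Finset.Icc 1 g, geom ℤ s ^ 24)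
      = ∏ s ∈ Finset.Icc 1 g, geom ℚ s ^ 24 := by
    rw [map_prod]
    exact Finset.prod_congr rfl fun s _ => by rw [map_pow, map_geom]
  have hQ : _root_.C g = (N : ℚ) := by
    rw [hC, ← hmapQ, PowerSeries.coeff_map, hN]
    norm_cast
  have hmap9 : (PowerSeries.map (Int.castRingHom (ZMod 9))) (∏ s ∈ Finset.Icc 1 g, geom ℤ s ^ 24)
      = ∏ s ∈ Finset.Icc 1 g, geom (ZMod 9) s ^ 24 := by
    rw [map_prod]
    exact Finset.prod_congr rfl fun s _ => by rw [map_pow, map_geom]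
  have hN9 : ((N : ZMod 9)) = 0 := by
    have h := main9 g hg
    rw [← hmap9, PowerSeries.coeff_map] at h
    exact_mod_cast h
  obtain ⟨k, hk⟩ := (ZMod.intCast_zmod_eq_zero_iff_dvd N 9).1 hN9
  refine ⟨k, ?_⟩
  rw [hQ, hk]
  push_cast
  ring
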